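/- The max-cost approximation ratio 5 of the Conditional-Median mechanism is tight: for every δ ∈ (0,1) there exists a facility-location instance and a feasible solution (y₁,y₂) with MC(y₁,y₂) > 0 such that the output (w₁,w₂) of the Conditional-Median mechanism on this instance satisfies MC(w₁,w₂) ≥ (5 − δ) · MC(y₁,y₂). -/

import Mathlib

open Finset

/-- The smallest element of `C` minimizing the distance to `p`. -/
noncomputable def tloc (C : Finset ℝ) (p : ℝ) : ℝ :=
  ((C.filter fun c => ∀ c' ∈ C, |p - c| ≤ |p - c'|).min).untopD 0

/-- The smallest element of `C \ {tloc C p}` minimizing the distance to `p`. -/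
noncomputable def sloc (C : Finset ℝ) (p : ℝ) : ℝ :=
  tloc (C.erase (tloc C p)) p

/-- The `⌈n/2⌉`-th smallest element of a multiset of reals (0 if empty). -/
noncomputable def medOf (l : Multiset ℝ) : ℝ :=
  (l.sort (· ≤ ·)).getD ((Multiset.card l + 1) / 2 - 1) 0

/-- The median position of the agents in `S` with positions `x`. -/
noncomputable def medianPos (S : Finset ℕ) (x : ℕ → ℝ) : ℝ :=
  medOf (S.val.map x)

/-- The Conditional-Median mechanism, assuming facility 1 is (weakly) more popular. -/
noncomputable def condMedian (x : ℕ → ℝ) (N1 N2 : Finset ℕ) (C : Finset ℝ) : ℝ × ℝ :=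
  if (N1 ∩ N2).card ≤ (N1 \ N2).card then
    let m1 := medianPos (N1 \ N2) x
    let m2 := medianPos N2 x
    let w1 := tloc C m1
    (w1, if tloc C m2 ≠ w1 then tloc C m2 else sloc C m2)
  else
    let m12 := medianPos (N1 ∩ N2) x
    (tloc C m12, sloc C m12)

/-- The output of the Conditional-Median mechanism (roles swapped if `|N₂| > |N₁|`). -/
noncomputable def mechOutput (x : ℕ → ℝ) (N1 N2 : Finset ℕ) (C : Finset ℝ) : ℝ × ℝ :=
  if N2.card ≤ N1.card then condMedian x N1 N2 C
  else (condMedian x N2 N1 C).swap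

/-- The cost of agent `i` at solution `y`: the distance to the farthest approved facility. -/
noncomputable def cost (x : ℕ → ℝ) (N1 N2 : Finset ℕ) (i : ℕ) (y : ℝ × ℝ) : ℝ :=
  if i ∈ N1 then
    if i ∈ N2 then max |x i - y.1| |x i - y.2| else |x i - y.1|
  else |x i - y.2|

/-- The social cost. -/
noncomputable def SC (x : ℕ → ℝ) (N1 N2 N : Finset ℕ) (y : ℝ × ℝ) : ℝ :=
  ∑ i ∈ N, cost x N1 N2 i y

/-- The max cost. -/
noncomputable def MC (x : ℕ → ℝ) (N1 N2 N : Finset ℕ) (hN : N.Nonempty) (y : ℝ × ℝ) : ℝ :=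
  N.sup' hN fun i => cost x N1 N2 i y

-- auxiliary lemmas
section Aux

private lemma tloc_eval2 : tloc ({-3,1,3} : Finset ℝ) 2 = 1 := by
  have h : Finset.filter
      (fun c => ∀ c' ∈ ({-3,1,3} : Finset ℝ), |(2:ℝ) - c| ≤ |2 - c'|) ({-3,1,3} : Finset ℝ) = {1,3} := by
    ext c
    simp only [Finset.mem_filter, Finset.mem_insert, Finset.mem_singleton]
    constructor
    · rintro ⟨(rfl|rfl|rfl), h⟩
      · exfalso; have := h 1 (by norm_num); norm_num at this
      · left; rfl
      · right; rfl
    · rintro (rfl|rfl) <;> refine ⟨by norm_num, ?_⟩ <;>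
        rintro c' (rfl|rfl|rfl) <;> norm_num
  rw [tloc, h]
  simp [Finset.min_insert, Finset.min_singleton]

private lemma tloc_eval0 : tloc ({-3,1,3} : Finset ℝ) 0 = 1 := by
  have h : Finset.filter
      (fun c => ∀ c' ∈ ({-3,1,3} : Finset ℝ), |(0:ℝ) - c| ≤ |0 - c'|) ({-3,1,3} : Finset ℝ) = {1} := by
    ext c
    simp only [Finset.mem_filter, Finset.mem_insert, Finset.mem_singleton]
    constructor
    · rintro ⟨(rfl|rfl|rfl), h⟩
      · exfalso; have := h 1 (by norm_num); norm_num at this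
      · rfl
      · exfalso; have := h 1 (by norm_num); norm_num at this
    · rintro rfl
      exact ⟨by norm_num, by rintro c' (rfl|rfl|rfl) <;> norm_num⟩
  rw [tloc, h]
  simp [Finset.min_singleton]

private lemma erase_eval : ({-3,1,3} : Finset ℝ).erase 1 = {-3,3} := by
  ext c
  simp only [Finset.mem_erase, Finset.mem_insert, Finset.mem_singleton]
  constructor
  · rintro ⟨hne, (rfl|rfl|rfl)⟩
    · left; rfl
    · exact absurd rfl hne
    · right; rfl
  · rintro (rfl|rfl)
    · exact ⟨by norm_num, Or.inl rfl⟩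
    · exact ⟨by norm_num, Or.inr (Or.inr rfl)⟩

private lemma sloc_eval0 : sloc ({-3,1,3} : Finset ℝ) 0 = -3 := by
  rw [sloc, tloc_eval0, erase_eval]
  have h : Finset.filter
      (fun c => ∀ c' ∈ ({-3,3} : Finset ℝ), |(0:ℝ) - c| ≤ |0 - c'|) ({-3,3} : Finset ℝ) = {-3,3} := by
    ext c
    simp only [Finset.mem_filter, Finset.mem_insert, Finset.mem_singleton]
    constructor
    · exact fun h => h.1
    · rintro (rfl|rfl) <;> refine ⟨by norm_num, ?_⟩ <;>
        rintro c' (rfl|rfl) <;> norm_num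
  rw [tloc, h]
  simp only [Finset.min_insert, Finset.min_singleton]
  rw [inf_eq_left.mpr (WithTop.coe_le_coe.mpr (by norm_num : (-3:ℝ) ≤ 3))]
  rfl

private lemma medOf_pair (a b : ℝ) (h : a ≤ b) : medOf ({a, b} : Multiset ℝ) = a := by
  have hp : (({a, b} : Multiset ℝ).sort (· ≤ ·)).Perm [a, b] :=
    Multiset.coe_eq_coe.mp (by rw [Multiset.sort_eq]; rfl)
  have hs : ({a, b} : Multiset ℝ).sort (· ≤ ·) = [a, b] :=
    List.Perm.eq_of_pairwise' (Multiset.pairwise_sort _ _) (by simp [h]) hp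
  rw [medOf, hs]
  simp

end Aux

private noncomputable def xex : ℕ → ℝ :=
  fun i => if i = 0 then 2 else if i = 1 then 3 else if i = 2 then 2 else 0

private lemma med_D : medianPos (({0,1,2} : Finset ℕ) \ ({2,3} : Finset ℕ)) xex = 2 := by
  have h1 : (({0,1,2} : Finset ℕ) \ ({2,3} : Finset ℕ)) = ({0,1} : Finset ℕ) := by decide
  have h2 : (({0,1} : Finset ℕ)).val = ({0,1} : Multiset ℕ) := by decide
  rw [medianPos, h1, h2]
  have h3 : Multiset.map xex ({0,1} : Multiset ℕ) = ({2,3} : Multiset ℝ) := by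
    simp [xex]
  rw [h3, medOf_pair 2 3 (by norm_num)]

private lemma med_2 : medianPos ({2,3} : Finset ℕ) xex = 0 := by
  have h2 : (({2,3} : Finset ℕ)).val = ({2,3} : Multiset ℕ) := by decide
  rw [medianPos, h2]
  have h3 : Multiset.map xex ({2,3} : Multiset ℕ) = ({2,0} : Multiset ℝ) := by
    simp [xex]
  rw [h3, Multiset.pair_comm, medOf_pair 0 2 (by norm_num)]

private lemma mech_eval :
    mechOutput xex ({0,1,2} : Finset ℕ) ({2,3} : Finset ℕ) ({-3,1,3} : Finset ℝ) = (1, -3) := by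
  rw [mechOutput, if_pos (by decide : (({2,3} : Finset ℕ)).card ≤ (({0,1,2} : Finset ℕ)).card)]
  rw [condMedian, if_pos (by decide :
    (({0,1,2} : Finset ℕ) ∩ ({2,3} : Finset ℕ)).card ≤
      ((({0,1,2} : Finset ℕ)) \ (({2,3} : Finset ℕ))).card)]
  simp only [med_D, med_2, tloc_eval2, tloc_eval0, sloc_eval0, ne_eq, not_true_eq_false,
    if_false, ite_not]

private lemma Nne : ({0,1,2,3} : Finset ℕ).Nonempty := ⟨0, by decide⟩

private lemma MC_opt :
    MC xex ({0,1,2} : Finset ℕ) ({2,3} : Finset ℕ) ({0,1,2,3} : Finset ℕ) Nne (3, 1) = 1 := by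
  rw [MC]
  apply le_antisymm
  · apply Finset.sup'_le
    intro i hi
    fin_cases hi <;> simp [cost, xex] <;> norm_num
  · have h : cost xex ({0,1,2} : Finset ℕ) ({2,3} : Finset ℕ) 0 (3, 1) = 1 := by
      simp [cost, xex]; norm_num
    exact h.ge.trans (Finset.le_sup' (fun i => cost xex ({0,1,2} : Finset ℕ) ({2,3} : Finset ℕ) i (3, 1)) (by decide : (0:ℕ) ∈ ({0,1,2,3} : Finset ℕ)))

private lemma MC_mech :
    MC xex ({0,1,2} : Finset ℕ) ({2,3} : Finset ℕ) ({0,1,2,3} : Finset ℕ) Nne (1, -3) = 5 := by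
  rw [MC]
  apply le_antisymm
  · apply Finset.sup'_le
    intro i hi
    fin_cases hi <;> simp [cost, xex] <;> norm_num
  · have h : cost xex ({0,1,2} : Finset ℕ) ({2,3} : Finset ℕ) 2 (1, -3) = 5 := by
      simp [cost, xex]; norm_num
    exact h.ge.trans (Finset.le_sup' (fun i => cost xex ({0,1,2} : Finset ℕ) ({2,3} : Finset ℕ) i (1, -3)) (by decide : (2:ℕ) ∈ ({0,1,2,3} : Finset ℕ)))

/-- The approximation ratio 5 for the max cost is tight. -/
theorem conditionalMedian_maxCost_tight (δ : ℝ) (hδ0 : 0 < δ) (hδ1 : δ < 1) :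
    ∃ (N N1 N2 : Finset ℕ) (x : ℕ → ℝ) (C : Finset ℝ) (y1 y2 : ℝ)
      (hN : N.Nonempty),
      N1.Nonempty ∧ N2.Nonempty ∧ N1 ∪ N2 = N ∧ 2 ≤ C.card ∧
      y1 ∈ C ∧ y2 ∈ C ∧ y1 ≠ y2 ∧ 0 < MC x N1 N2 N hN (y1, y2) ∧
      (5 - δ) * MC x N1 N2 N hN (y1, y2) ≤ MC x N1 N2 N hN (mechOutput x N1 N2 C) := by
  refine ⟨{0,1,2,3}, {0,1,2}, {2,3}, xex, {-3,1,3}, 3, 1, Nne, ⟨0, by decide⟩, ⟨2, by decide⟩,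
    by decide, ?_, by norm_num, by norm_num, by norm_num, ?_, ?_⟩
  · rw [Finset.card_insert_of_notMem (by norm_num), Finset.card_insert_of_notMem (by norm_num),
      Finset.card_singleton]
    norm_num
  · rw [MC_opt]; norm_num
  · rw [mech_eval, MC_opt, MC_mech]; linarith
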